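/- Let (V, E, o, t, inv) be a finite multigraph with ν = #V, let m : E → ℝ^d and α : E → ℝ be 1-forms, and Q : V → ℝ. For θ ∈ ℝ^d let H(θ) = Δ_{m,α}(θ) + Q with eigenvalues λ_1(θ) ≤ … ≤ λ_ν(θ). Then Σ_{n=1}^{ν} ( sup_{θ ∈ ℝ^d} λ_n(θ) − inf_{θ ∈ ℝ^d} λ_n(θ) ) ≤ 2 · #supp m, and consequently the Lebesgue measure of the set Σ = { x ∈ ℝ : x is an eigenvalue of H(θ) for some θ ∈ ℝ^d } satisfies |Σ| ≤ 2 · #supp m (note 2·#supp m = 4I where I is half the number of oriented edges in supp m). (Paper: Theorem 2.5(ii) at the level of fiber operators.) -/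

import Mathlib

open scoped Classical
open Finset

noncomputable section

/-- The degree of a vertex: the number of oriented edges starting at it. -/
def mdeg {V E : Type} [Fintype E] (o : E → V) (v : V) : ℕ :=
  (Finset.univ.filter fun e => o e = v).card

/-- The combinatorial magnetic Laplacian `Δ_α`. -/
def magLap {V E : Type} [Fintype E] (o t : E → V) (α : E → ℝ)
    (f : V → ℂ) (v : V) : ℂ :=
  ∑ e ∈ Finset.univ.filter (fun e => o e = v),
    (f v - Complex.exp (Complex.I * (α e : ℂ)) * f (t e))

/-- The fiber magnetic Laplacian `Δ_{m,φ}(θ)`. -/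
def fiberLap {V E : Type} [Fintype E] {d : ℕ} (o t : E → V)
    (m : E → Fin d → ℝ) (φ : E → ℝ) (θ : Fin d → ℝ) (f : V → ℂ) (v : V) : ℂ :=
  (mdeg o v : ℂ) * f v -
    ∑ e ∈ Finset.univ.filter (fun e => o e = v),
      Complex.exp (Complex.I * ((φ e + ∑ i, m e i * θ i : ℝ) : ℂ)) * f (t e)

/-- Standard inner product on `ℂ^V` (conjugate-linear in the first argument). -/
def dotC {V : Type} [Fintype V] (f g : V → ℂ) : ℂ :=
  ∑ v, (starRingEnd ℂ) (f v) * g v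

/-- `lam` lists the eigenvalues of the operator `T` on `ℂ^V` in nondecreasing
order, counted with multiplicity (witnessed by an orthonormal eigenbasis). -/
def IsEigList {V : Type} [Fintype V] (T : (V → ℂ) → (V → ℂ))
    (lam : Fin (Fintype.card V) → ℝ) : Prop :=
  Monotone lam ∧ ∃ u : Fin (Fintype.card V) → (V → ℂ),
    (∀ i j, dotC (u i) (u j) = if i = j then (1 : ℂ) else 0) ∧
    ∀ i, T (u i) = fun v => ((lam i : ℝ) : ℂ) * u i v

/-- A closed walk in the multigraph. -/
def IsClosedWalk {V E : Type} (o t : E → V) {k : ℕ} (c : Fin (k + 1) → E) : Prop :=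
  (∀ i : Fin k, t (c i.castSucc) = o (c i.succ)) ∧ t (c (Fin.last k)) = o (c 0)

/-- Two forms have the same flux along every closed walk. -/
def SameFlux {V E W : Type} [AddCommMonoid W] (o t : E → V) (b b' : E → W) : Prop :=
  ∀ (k : ℕ) (c : Fin (k + 1) → E), IsClosedWalk o t c →
    ∑ i, b (c i) = ∑ i, b' (c i)

/-- Connectivity of the multigraph: any two distinct vertices are the endpoints
of some walk. -/
def MGConnected {V E : Type} (o t : E → V) : Prop :=
  ∀ u v : V, u ≠ v → ∃ (k : ℕ) (c : Fin (k + 1) → E),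
    (∀ i : Fin k, t (c i.castSucc) = o (c i.succ)) ∧ o (c 0) = u ∧ t (c (Fin.last k)) = v

/-- The set of fluxes of a form along all closed walks. -/
def fluxSet {V E W : Type} [AddCommMonoid W] (o t : E → V) (b : E → W) : Set W :=
  {w | ∃ (k : ℕ) (c : Fin (k + 1) → E), IsClosedWalk o t c ∧ ∑ i, b (c i) = w}

/-- The number of oriented edges in the support of a form. -/
def suppCard {E : Type} [Fintype E] {W : Type} [Zero W] (b : E → W) : ℕ :=
  (Finset.univ.filter fun e => b e ≠ 0).card

/-- The integer lattice `ℤ^d` inside `ℝ^d`. -/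
def intLattice (d : ℕ) : Set (Fin d → ℝ) :=
  {w | ∀ i, ∃ z : ℤ, w i = (z : ℝ)}

namespace FSMBaux

open Complex

variable {V : Type} [Fintype V]

lemma dotC_zero_right (f : V → ℂ) : dotC f 0 = 0 := by
  simp [dotC]

lemma dotC_sum_right {ι : Type*} (s : Finset ι) (f : V → ℂ) (c : ι → ℂ)
    (g : ι → V → ℂ) :
    dotC f (∑ i ∈ s, c i • g i) = ∑ i ∈ s, c i * dotC f (g i) := by
  unfold dotC
  simp only [Finset.sum_apply, Pi.smul_apply, smul_eq_mul, Finset.mul_sum]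
  rw [Finset.sum_comm]
  exact Finset.sum_congr rfl fun i _ => Finset.sum_congr rfl fun v _ => by ring

lemma dotC_sum_left {ι : Type*} (s : Finset ι) (f : V → ℂ) (c : ι → ℂ)
    (g : ι → V → ℂ) :
    dotC (∑ i ∈ s, c i • g i) f = ∑ i ∈ s, (starRingEnd ℂ) (c i) * dotC (g i) f := by
  unfold dotC
  simp only [Finset.sum_apply, Pi.smul_apply, smul_eq_mul, map_sum, map_mul,
    Finset.sum_mul, Finset.mul_sum]
  rw [Finset.sum_comm]
  exact Finset.sum_congr rfl fun i _ => Finset.sum_congr rfl fun v _ => by ring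

lemma dotC_mul_right (f g : V → ℂ) (x : ℂ) :
    dotC f (fun v => x * g v) = x * dotC f g := by
  unfold dotC
  simp only [Finset.mul_sum]
  exact Finset.sum_congr rfl fun v _ => by ring

/-- Orthonormal families give "diagonal" double sums. -/
lemma dotC_double {ι : Type*} [Fintype ι] [DecidableEq ι] (u : ι → V → ℂ)
    (hu : ∀ i j, dotC (u i) (u j) = if i = j then (1 : ℂ) else 0)
    (c dcoef : ι → ℂ) :
    dotC (∑ j, c j • u j) (∑ j, dcoef j • u j)
      = ∑ j, (starRingEnd ℂ) (c j) * dcoef j := by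
  rw [dotC_sum_left]
  refine Finset.sum_congr rfl fun i _ => ?_
  rw [dotC_sum_right]
  simp only [hu, mul_ite, mul_one, mul_zero]
  simp [Finset.sum_ite_eq]

end FSMBaux
namespace FSMBaux2
open FSMBaux Matrix

variable {V : Type} [Fintype V] [Nonempty V]

/-- Orthonormal families of full cardinality are complete. -/
lemma dotC_expand (u : Fin (Fintype.card V) → V → ℂ)
    (hu : ∀ i j, dotC (u i) (u j) = if i = j then (1 : ℂ) else 0)
    (f : V → ℂ) : f = ∑ j, dotC (u j) f • u j := by
  have hne : Nonempty (Fin (Fintype.card V)) := ⟨⟨0, Fintype.card_pos⟩⟩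
  have li : LinearIndependent ℂ u := by
    rw [Fintype.linearIndependent_iff]
    intro g hg i
    have h0 : dotC (u i) (∑ j, g j • u j) = dotC (u i) 0 := by rw [hg]
    rw [dotC_sum_right, dotC_zero_right] at h0
    simpa [hu, Finset.sum_ite_eq] using h0
  have hcard : Fintype.card (Fin (Fintype.card V)) = Module.finrank ℂ (V → ℂ) := by
    simp [Module.finrank_pi]
  let b := basisOfLinearIndependentOfCardEqFinrank li hcard
  have hb : ⇑b = u := coe_basisOfLinearIndependentOfCardEqFinrank li hcard
  have hexp : f = ∑ i, b.repr f i • u i := by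
    conv_lhs => rw [← b.sum_repr f]
    rw [hb]
  have hc : ∀ j, dotC (u j) f = b.repr f j := by
    intro j
    conv_lhs => rw [hexp]
    rw [dotC_sum_right]
    simp [hu, Finset.sum_ite_eq]
  calc f = ∑ i, b.repr f i • u i := hexp
    _ = ∑ j, dotC (u j) f • u j := by
        refine Finset.sum_congr rfl fun j _ => ?_
        rw [hc]

/-- Any eigenvalue of a diagonalized operator appears in the eigenvalue list. -/
lemma eig_mem (M : Matrix V V ℂ) (lam : Fin (Fintype.card V) → ℝ)
    (u : Fin (Fintype.card V) → V → ℂ)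
    (hu : ∀ i j, dotC (u i) (u j) = if i = j then (1 : ℂ) else 0)
    (he : ∀ i, M *ᵥ u i = fun v => (lam i : ℂ) * u i v)
    (x : ℝ) (f : V → ℂ) (hf : f ≠ 0)
    (hfe : M *ᵥ f = fun v => (x : ℂ) * f v) :
    ∃ n, x = lam n := by
  set c : Fin (Fintype.card V) → ℂ := fun j => dotC (u j) f with hcdef
  have hexp : f = ∑ j, c j • u j := dotC_expand u hu f
  have hex : ∃ j, c j ≠ 0 := by
    by_contra h
    push_neg at h
    apply hf
    rw [hexp]
    simp [h]
  obtain ⟨j, hj⟩ := hex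
  have hmv : M *ᵥ f = ∑ i, (c i * (lam i : ℂ)) • u i := by
    conv_lhs => rw [hexp]
    rw [← Matrix.mulVecLin_apply, map_sum]
    refine Finset.sum_congr rfl fun i _ => ?_
    rw [_root_.map_smul, Matrix.mulVecLin_apply, he i]
    funext v
    simp only [Pi.smul_apply, smul_eq_mul]
    ring
  have h1 : dotC (u j) (M *ᵥ f) = c j * (lam j : ℂ) := by
    rw [hmv, dotC_sum_right]
    simp [hu, Finset.sum_ite_eq]
  have h2 : dotC (u j) (M *ᵥ f) = (x : ℂ) * c j := by
    rw [hfe, dotC_mul_right]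
  have : c j * (lam j : ℂ) = (x : ℂ) * c j := by rw [← h1, h2]
  have hx : (x : ℂ) = (lam j : ℂ) := by
    have h' : (x : ℂ) * c j = (lam j : ℂ) * c j := by linear_combination -this
    exact mul_right_cancel₀ hj h'
  exact ⟨j, by exact_mod_cast hx⟩

end FSMBaux2
namespace FSMBaux3
open FSMBaux FSMBaux2 Matrix

variable {V : Type} [Fintype V] [Nonempty V]

lemma eig_le_eig (M1 M2 : Matrix V V ℂ)
    (lam1 lam2 : Fin (Fintype.card V) → ℝ) (u w : Fin (Fintype.card V) → V → ℂ)
    (h1 : Monotone lam1) (h2 : Monotone lam2)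
    (hu : ∀ i j, dotC (u i) (u j) = if i = j then (1:ℂ) else 0)
    (hw : ∀ i j, dotC (w i) (w j) = if i = j then (1:ℂ) else 0)
    (he1 : ∀ i, M1 *ᵥ u i = fun v => (lam1 i : ℂ) * u i v)
    (he2 : ∀ i, M2 *ᵥ w i = fun v => (lam2 i : ℂ) * w i v)
    (hform : ∀ f : V → ℂ, ∃ r : ℝ, 0 ≤ r ∧ dotC f (M2 *ᵥ f) = dotC f (M1 *ᵥ f) + r)
    (n : Fin (Fintype.card V)) : lam1 n ≤ lam2 n := by
  classical
  have hn1 : (n : ℕ) + 1 ≤ Fintype.card V := n.2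
  have hn0 : (n : ℕ) ≤ Fintype.card V := Nat.le_of_lt n.2
  set wi : Fin ((n : ℕ) + 1) → V → ℂ := fun i => w (Fin.castLE hn1 i) with hwi
  have hcLE : Function.Injective (Fin.castLE hn1) := fun i j hij =>
    Fin.ext (by simpa using congrArg Fin.val hij)
  have hwi_on : ∀ i j, dotC (wi i) (wi j) = if i = j then (1:ℂ) else 0 := by
    intro i j
    rw [hw]
    by_cases h : i = j
    · simp [h]
    · rw [if_neg h, if_neg (fun H => h (hcLE H))]
  -- a nonzero coefficient vector orthogonal to the first n eigenvectors of M1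
  let L : (Fin ((n:ℕ)+1) → ℂ) →ₗ[ℂ] (Fin (n:ℕ) → ℂ) :=
    { toFun := fun a j => ∑ i, a i * dotC (u (Fin.castLE hn0 j)) (wi i)
      map_add' := by
        intro a b
        funext j
        simp [add_mul, Finset.sum_add_distrib]
      map_smul' := by
        intro cst a
        funext j
        simp [Finset.mul_sum, mul_assoc] }
  have hnotinj : ¬ Function.Injective L := by
    intro hinj
    have hle := LinearMap.finrank_le_finrank_of_injective hinj
    simp [Module.finrank_pi] at hle
  obtain ⟨a1, a2, hLa, hne⟩ := Function.not_injective_iff.mp hnotinj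
  set a : Fin ((n:ℕ)+1) → ℂ := a1 - a2 with ha
  have ha0 : a ≠ 0 := sub_ne_zero.mpr hne
  have hLa0 : L a = 0 := by rw [ha, map_sub, hLa, sub_self]
  set f : V → ℂ := ∑ i, a i • wi i with hf
  set c : Fin (Fintype.card V) → ℂ := fun j => dotC (u j) f with hc
  have hcz : ∀ j : Fin (Fintype.card V), (j : ℕ) < (n : ℕ) → c j = 0 := by
    intro j hj
    have h3' : Fin.castLE hn0 ⟨(j:ℕ), hj⟩ = j := Fin.ext (by simp)
    have h2' : L a ⟨(j:ℕ), hj⟩ = 0 := by rw [hLa0]; rfl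
    calc c j = dotC (u j) f := rfl
      _ = ∑ i, a i * dotC (u j) (wi i) := by rw [hf, dotC_sum_right]
      _ = L a ⟨(j:ℕ), hj⟩ := by
            show _ = ∑ i, a i * dotC (u (Fin.castLE hn0 ⟨(j:ℕ), hj⟩)) (wi i)
            rw [h3']
      _ = 0 := h2'
  have hexp : f = ∑ j, c j • u j := dotC_expand u hu f
  -- quadratic form values
  have hff_u : dotC f f = ∑ j, (starRingEnd ℂ) (c j) * c j := by
    conv_lhs => rw [hexp]
    exact dotC_double u hu c c
  have hff_w : dotC f f = ∑ i, (starRingEnd ℂ) (a i) * a i := by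
    conv_lhs => rw [hf]
    exact dotC_double wi hwi_on a a
  have hmv1 : M1 *ᵥ f = ∑ j, (c j * (lam1 j : ℂ)) • u j := by
    conv_lhs => rw [hexp]
    rw [← Matrix.mulVecLin_apply, map_sum]
    refine Finset.sum_congr rfl fun j _ => ?_
    rw [_root_.map_smul, Matrix.mulVecLin_apply, he1 j]
    funext v
    simp only [Pi.smul_apply, smul_eq_mul]
    ring
  have hmv2 : M2 *ᵥ f = ∑ i, (a i * (lam2 (Fin.castLE hn1 i) : ℂ)) • wi i := by
    conv_lhs => rw [hf]
    rw [← Matrix.mulVecLin_apply, map_sum]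
    refine Finset.sum_congr rfl fun i _ => ?_
    rw [_root_.map_smul, Matrix.mulVecLin_apply]
    show (a i) • (M2 *ᵥ w (Fin.castLE hn1 i)) = _
    rw [he2 (Fin.castLE hn1 i)]
    funext v
    simp only [Pi.smul_apply, smul_eq_mul]
    ring
  have hT1 : dotC f (M1 *ᵥ f) = ∑ j, (starRingEnd ℂ) (c j) * (c j * (lam1 j : ℂ)) := by
    rw [hmv1]
    conv_lhs => rw [hexp]
    exact dotC_double u hu c _
  have hT2 : dotC f (M2 *ᵥ f)
      = ∑ i, (starRingEnd ℂ) (a i) * (a i * (lam2 (Fin.castLE hn1 i) : ℂ)) := by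
    rw [hmv2]
    conv_lhs => rw [hf]
    exact dotC_double wi hwi_on a _
  set F : ℝ := ∑ j, Complex.normSq (c j) with hF
  set F' : ℝ := ∑ i, Complex.normSq (a i) with hF'
  set S1 : ℝ := ∑ j, Complex.normSq (c j) * lam1 j with hS1
  set S2 : ℝ := ∑ i, Complex.normSq (a i) * lam2 (Fin.castLE hn1 i) with hS2
  have hcast1 : dotC f (M1 *ᵥ f) = (S1 : ℂ) := by
    rw [hT1, hS1]
    push_cast
    refine Finset.sum_congr rfl fun j _ => ?_
    rw [← Complex.mul_conj]
    ring
  have hcast2 : dotC f (M2 *ᵥ f) = (S2 : ℂ) := by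
    rw [hT2, hS2]
    push_cast
    refine Finset.sum_congr rfl fun i _ => ?_
    rw [← Complex.mul_conj]
    ring
  have hcastF : dotC f f = (F : ℂ) := by
    rw [hff_u, hF]
    push_cast
    refine Finset.sum_congr rfl fun j _ => ?_
    rw [← Complex.mul_conj]
    ring
  have hcastF' : dotC f f = (F' : ℂ) := by
    rw [hff_w, hF']
    push_cast
    refine Finset.sum_congr rfl fun i _ => ?_
    rw [← Complex.mul_conj]
    ring
  have hFF' : F = F' := by
    have : (F : ℂ) = (F' : ℂ) := by rw [← hcastF, ← hcastF']
    exact_mod_cast this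
  obtain ⟨r, hr0, hreq⟩ := hform f
  have hS21 : S2 = S1 + r := by
    have : (S2 : ℂ) = ((S1 + r : ℝ) : ℂ) := by
      rw [← hcast2, hreq, hcast1]
      push_cast
      ring
    exact_mod_cast this
  have hlow : lam1 n * F ≤ S1 := by
    rw [hF, hS1, Finset.mul_sum]
    refine Finset.sum_le_sum fun j _ => ?_
    rcases eq_or_ne (c j) 0 with h | h
    · simp [h]
    · have hjn : n ≤ j := by
        by_contra hlt
        push_neg at hlt
        exact h (hcz j hlt)
      have hmono := h1 hjn
      nlinarith [Complex.normSq_nonneg (c j)]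
  have hup : S2 ≤ lam2 n * F' := by
    rw [hF', hS2, Finset.mul_sum]
    refine Finset.sum_le_sum fun i _ => ?_
    have hin : Fin.castLE hn1 i ≤ n := by
      have := i.isLt
      rw [Fin.le_def, Fin.coe_castLE]
      omega
    have hmono := h2 hin
    nlinarith [Complex.normSq_nonneg (a i)]
  have hFpos : 0 < F' := by
    rw [hF']
    have hex : ∃ i, a i ≠ 0 := by
      by_contra hh
      push_neg at hh
      exact ha0 (funext hh)
    obtain ⟨i0, hi0⟩ := hex
    refine Finset.sum_pos' (fun i _ => Complex.normSq_nonneg _) ⟨i0, Finset.mem_univ _, ?_⟩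
    exact Complex.normSq_pos.mpr hi0
  have hchain : lam1 n * F' ≤ lam2 n * F' := by
    calc lam1 n * F' = lam1 n * F := by rw [hFF']
      _ ≤ S1 := hlow
      _ ≤ S2 := by linarith
      _ ≤ lam2 n * F' := hup
  exact le_of_mul_le_mul_right hchain hFpos

end FSMBaux3
namespace FSMBaux4
open FSMBaux Matrix

variable {V : Type} [Fintype V] [Nonempty V]

lemma herm_eiglist [DecidableEq V] (M : Matrix V V ℂ) (hM : M.IsHermitian) :
    ∃ (lam : Fin (Fintype.card V) → ℝ) (u : Fin (Fintype.card V) → V → ℂ),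
      Monotone lam ∧
      (∀ i j, dotC (u i) (u j) = if i = j then (1:ℂ) else 0) ∧
      (∀ i, M *ᵥ u i = fun v => (lam i : ℂ) * u i v) ∧
      (∑ n, (lam n : ℂ)) = ∑ v, M v v := by
  let e : Fin (Fintype.card V) ≃ V := (Fintype.equivFin V).symm
  let g : Fin (Fintype.card V) → ℝ := fun i => hM.eigenvalues (e i)
  let σ := Tuple.sort g
  refine ⟨g ∘ σ, fun i => (WithLp.equiv 2 (V → ℂ)) (hM.eigenvectorBasis (e (σ i))),
    Tuple.monotone_sort g, ?_, ?_, ?_⟩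
  · intro i j
    have horth := orthonormal_iff_ite.mp hM.eigenvectorBasis.orthonormal
      (e (σ i)) (e (σ j))
    have hdot : dotC ((WithLp.equiv 2 (V → ℂ)) (hM.eigenvectorBasis (e (σ i))))
        ((WithLp.equiv 2 (V → ℂ)) (hM.eigenvectorBasis (e (σ j))))
        = inner (𝕜 := ℂ) (hM.eigenvectorBasis (e (σ i))) (hM.eigenvectorBasis (e (σ j))) := by
      rw [PiLp.inner_apply]
      simp [dotC, RCLike.inner_apply]
      exact Finset.sum_congr rfl fun x _ => mul_comm _ _
    rw [hdot, horth]
    have hiff : (e (σ i) = e (σ j)) ↔ i = j :=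
      ⟨fun h => σ.injective (e.injective h), fun h => by rw [h]⟩
    by_cases h : i = j
    · simp [h]
    · rw [if_neg (fun H => h (hiff.mp H)), if_neg h]
  · intro i
    have hmv := hM.mulVec_eigenvectorBasis (e (σ i))
    show M *ᵥ (hM.eigenvectorBasis (e (σ i))).ofLp
      = fun v => (((g ∘ σ) i : ℝ) : ℂ) * (hM.eigenvectorBasis (e (σ i))).ofLp v
    rw [hmv]
    funext v
    simp only [Pi.smul_apply, Function.comp_apply]
    rw [Complex.real_smul]
  · have hs : (∑ n, ((g ∘ σ) n : ℂ)) = ∑ n, (g n : ℂ) :=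
      Equiv.sum_comp σ fun n => ((g n : ℝ) : ℂ)
    have hs2 : (∑ n, (g n : ℂ)) = ∑ v, (hM.eigenvalues v : ℂ) :=
      Equiv.sum_comp e fun v => ((hM.eigenvalues v : ℝ) : ℂ)
    rw [hs, hs2]
    set U : Matrix V V ℂ := (Matrix.IsHermitian.eigenvectorUnitary hM : Matrix V V ℂ) with hU
    set D : Matrix V V ℂ := Matrix.diagonal (RCLike.ofReal ∘ hM.eigenvalues) with hD
    have h1 : star U * U = 1 := Unitary.coe_star_mul_self _
    have h2 : Matrix.trace (U * D * star U) = Matrix.trace D := by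
      rw [Matrix.trace_mul_comm (U * D) (star U), ← Matrix.mul_assoc, h1, Matrix.one_mul]
    calc (∑ v, (hM.eigenvalues v : ℂ))
        = Matrix.trace D := by
          rw [hD, Matrix.trace_diagonal]
          rfl
      _ = Matrix.trace (U * D * star U) := h2.symm
      _ = Matrix.trace M := by conv_rhs => rw [hM.spectral_theorem, Unitary.conjStarAlgAut_apply]
      _ = ∑ v, M v v := by rw [Matrix.trace]; rfl

end FSMBaux4
namespace FSMBgraph
open FSMBaux Matrix

variable {V E : Type} [Fintype V] [Fintype E] {d : ℕ}

def pha (m : E → Fin d → ℝ) (α : E → ℝ) (θ : Fin d → ℝ) (e : E) : ℝ :=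
  α e + ∑ i, m e i * θ i

def zet (m : E → Fin d → ℝ) (α : E → ℝ) (θ : Fin d → ℝ) (e : E) : ℂ :=
  Complex.exp (Complex.I * ((pha m α θ e : ℝ) : ℂ))

def supE (m : E → Fin d → ℝ) : Finset E := Finset.univ.filter fun e => m e ≠ 0

def degmv (o : E → V) (m : E → Fin d → ℝ) (v : V) : ℕ :=
  ((supE m).filter fun e => o e = v).card

def Amat (o t : E → V) (m : E → Fin d → ℝ) (α : E → ℝ) (Q : V → ℝ)
    (θ : Fin d → ℝ) : Matrix V V ℂ :=
  Matrix.of fun v w => (if v = w then ((mdeg o v : ℂ) + (Q v : ℂ)) else 0)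
    - ∑ e ∈ (Finset.univ.filter fun e => o e = v).filter fun e => t e = w, zet m α θ e

def Hmat (o t : E → V) (m : E → Fin d → ℝ) (α : E → ℝ) (Q : V → ℝ) : Matrix V V ℂ :=
  Matrix.of fun v w => (if v = w then ((mdeg o v : ℂ) + (Q v : ℂ)) else 0)
    - ∑ e ∈ ((Finset.univ.filter fun e => o e = v).filter fun e => t e = w).filter
        fun e => m e = 0, Complex.exp (Complex.I * ((α e : ℝ) : ℂ))

def Dmat (o : E → V) (m : E → Fin d → ℝ) : Matrix V V ℂ :=
  Matrix.of fun v w => if v = w then ((degmv o m v : ℕ) : ℂ) else 0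

def Pmat (o t : E → V) (m : E → Fin d → ℝ) (α : E → ℝ) (s : ℝ)
    (θ : Fin d → ℝ) : Matrix V V ℂ :=
  Matrix.of fun v w => Dmat o m v w
    + (s : ℂ) * ∑ e ∈ ((supE m).filter fun e => o e = v).filter fun e => t e = w,
        zet m α θ e

variable (o t : E → V) (m : E → Fin d → ℝ) (α : E → ℝ) (Q : V → ℝ)

lemma sum_fiber_t (s : Finset E) (z : E → ℂ) (f : V → ℂ) :
    ∑ w, (∑ e ∈ s.filter fun e => t e = w, z e) * f w = ∑ e ∈ s, z e * f (t e) := by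
  have h : ∀ w, (∑ e ∈ s.filter fun e => t e = w, z e) * f w
      = ∑ e ∈ s.filter (fun e => t e = w), z e * f (t e) := by
    intro w
    rw [Finset.sum_mul]
    refine Finset.sum_congr rfl fun e he => ?_
    rw [(Finset.mem_filter.mp he).2]
  simp_rw [h]
  exact Finset.sum_fiberwise s t (fun e => z e * f (t e))

lemma Amat_mulVec (θ : Fin d → ℝ) (f : V → ℂ) (v : V) :
    (Amat o t m α Q θ *ᵥ f) v
      = ((mdeg o v : ℂ) + (Q v : ℂ)) * f v
        - ∑ e ∈ Finset.univ.filter fun e => o e = v, zet m α θ e * f (t e) := by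
  show (∑ w, ((if v = w then ((mdeg o v : ℂ) + (Q v : ℂ)) else 0)
      - ∑ e ∈ (Finset.univ.filter fun e => o e = v).filter fun e => t e = w,
          zet m α θ e) * f w) = _
  simp only [sub_mul, Finset.sum_sub_distrib]
  congr 1
  · simp [ite_mul, Finset.sum_ite_eq]
  · exact sum_fiber_t t _ _ f

lemma fiber_op_eq (θ : Fin d → ℝ) :
    (fun f v => fiberLap o t m α θ f v + (Q v : ℂ) * f v)
      = fun f => (Amat o t m α Q θ) *ᵥ f := by
  funext f v
  rw [Amat_mulVec]
  unfold fiberLap zet pha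
  ring

lemma Pmat_mulVec (s : ℝ) (θ : Fin d → ℝ) (f : V → ℂ) (v : V) :
    (Pmat o t m α s θ *ᵥ f) v
      = (degmv o m v : ℂ) * f v
        + (s : ℂ) * ∑ e ∈ (supE m).filter (fun e => o e = v), zet m α θ e * f (t e) := by
  show (∑ w, (Dmat o m v w
      + (s : ℂ) * ∑ e ∈ ((supE m).filter fun e => o e = v).filter fun e => t e = w,
          zet m α θ e) * f w) = _
  simp only [add_mul, Finset.sum_add_distrib]
  congr 1
  · simp [Dmat, ite_mul, Finset.sum_ite_eq]
  · have h : ∀ w, ((s : ℂ) * ∑ e ∈ ((supE m).filter fun e => o e = v).filter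
        fun e => t e = w, zet m α θ e) * f w
        = (s : ℂ) * ((∑ e ∈ ((supE m).filter fun e => o e = v).filter
            fun e => t e = w, zet m α θ e) * f w) := fun w => by ring
    simp_rw [h]
    rw [← Finset.mul_sum, sum_fiber_t t _ _ f]

end FSMBgraph
namespace FSMBgraph2
open FSMBaux FSMBgraph Matrix

variable {V E : Type} [Fintype V] [Fintype E] {d : ℕ}
variable (inv : E → E) (m : E → Fin d → ℝ) (α : E → ℝ)

lemma zet_m0 (θ : Fin d → ℝ) {e : E} (h : m e = 0) :
    zet m α θ e = Complex.exp (Complex.I * ((α e : ℝ) : ℂ)) := by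
  unfold zet pha
  rw [h]
  simp

lemma pha_inv (hm : ∀ e, m (inv e) = - m e) (hα : ∀ e, α (inv e) = - α e)
    (θ : Fin d → ℝ) (e : E) : pha m α θ (inv e) = - pha m α θ e := by
  unfold pha
  rw [hα, hm]
  simp only [Pi.neg_apply, neg_mul, Finset.sum_neg_distrib]
  ring

lemma conj_exp_I_real (x : ℝ) :
    (starRingEnd ℂ) (Complex.exp (Complex.I * (x : ℂ)))
      = Complex.exp (Complex.I * ((-x : ℝ) : ℂ)) := by
  rw [← Complex.exp_conj]
  congr 1
  simp only [_root_.map_mul, Complex.conj_I, Complex.conj_ofReal]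
  push_cast
  ring

lemma zet_inv (hm : ∀ e, m (inv e) = - m e) (hα : ∀ e, α (inv e) = - α e)
    (θ : Fin d → ℝ) (e : E) :
    zet m α θ (inv e) = (starRingEnd ℂ) (zet m α θ e) := by
  unfold zet
  rw [conj_exp_I_real, pha_inv inv m α hm hα]

lemma zet_mul_conj (θ : Fin d → ℝ) (e : E) :
    zet m α θ e * (starRingEnd ℂ) (zet m α θ e) = 1 := by
  unfold zet
  rw [conj_exp_I_real, ← Complex.exp_add]
  have h : Complex.I * ((pha m α θ e : ℝ) : ℂ)
      + Complex.I * ((-(pha m α θ e) : ℝ) : ℂ) = 0 := by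
    push_cast
    ring
  rw [h, Complex.exp_zero]

variable (o t : E → V) (Q : V → ℝ)

lemma Dmat_herm : (Dmat o m (V := V)).IsHermitian := by
  apply Matrix.ext
  intro v w
  rw [Matrix.conjTranspose_apply]
  show star (Dmat o m w v) = Dmat o m v w
  unfold Dmat
  simp only [Matrix.of_apply]
  by_cases h : v = w
  · subst h
    simp
  · rw [if_neg (fun H => h H.symm), if_neg h, star_zero]

lemma Hmat_herm (hinv : ∀ e, inv (inv e) = e)
    (hoi : ∀ e, o (inv e) = t e) (hti : ∀ e, t (inv e) = o e)
    (hm : ∀ e, m (inv e) = - m e) (hα : ∀ e, α (inv e) = - α e) :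
    (Hmat o t m α Q).IsHermitian := by
  apply Matrix.ext
  intro v w
  rw [Matrix.conjTranspose_apply]
  show star (Hmat o t m α Q w v) = Hmat o t m α Q v w
  unfold Hmat
  simp only [Matrix.of_apply]
  rw [star_sub]
  congr 1
  · by_cases h : v = w
    · subst h
      rw [if_pos rfl]
      show (starRingEnd ℂ) ((mdeg o v : ℂ) + (Q v : ℂ)) = _
      rw [map_add]
      simp [Complex.conj_ofReal]
    · rw [if_neg (fun H => h H.symm), if_neg h, star_zero]
  · rw [star_sum]
    refine Finset.sum_nbij' (fun e => inv e) (fun e => inv e) ?_ ?_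
      (fun a _ => hinv a) (fun a _ => hinv a) ?_
    · intro e he
      simp only [Finset.mem_filter, Finset.mem_univ, true_and] at he ⊢
      exact ⟨⟨by rw [hoi, he.1.2], by rw [hti, he.1.1]⟩, by rw [hm, he.2, neg_zero]⟩
    · intro e he
      simp only [Finset.mem_filter, Finset.mem_univ, true_and] at he ⊢
      exact ⟨⟨by rw [hoi, he.1.2], by rw [hti, he.1.1]⟩, by rw [hm, he.2, neg_zero]⟩
    · intro e _
      show star (Complex.exp (Complex.I * ((α e : ℝ) : ℂ))) = _
      rw [(by rfl : (star (Complex.exp (Complex.I * ((α e : ℝ) : ℂ))) : ℂ)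
        = (starRingEnd ℂ) (Complex.exp (Complex.I * ((α e : ℝ) : ℂ)))),
        conj_exp_I_real, hα]

end FSMBgraph2
namespace FSMBgraph3
open FSMBaux FSMBgraph FSMBgraph2 Matrix

variable {V E : Type} [Fintype V] [Fintype E] {d : ℕ}
variable (o t : E → V) (inv : E → E) (m : E → Fin d → ℝ) (α : E → ℝ) (Q : V → ℝ)

lemma setswap (v w : V) :
    (((Finset.univ.filter fun e => o e = v).filter fun e => t e = w).filter
        fun e => ¬ (m e = 0))
      = ((supE m).filter fun e => o e = v).filter fun e => t e = w := by
  ext e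
  simp only [Finset.mem_filter, Finset.mem_univ, true_and, supE]
  tauto

lemma amat_sum_split (θ : Fin d → ℝ) (v w : V) :
    (∑ e ∈ (Finset.univ.filter fun e => o e = v).filter fun e => t e = w,
        zet m α θ e)
      = (∑ e ∈ ((Finset.univ.filter fun e => o e = v).filter fun e => t e = w).filter
            fun e => m e = 0, Complex.exp (Complex.I * ((α e : ℝ) : ℂ)))
        + ∑ e ∈ ((supE m).filter fun e => o e = v).filter fun e => t e = w,
            zet m α θ e := by
  rw [← setswap o t m v w,
    ← Finset.sum_filter_add_sum_filter_not
      ((Finset.univ.filter fun e => o e = v).filter fun e => t e = w)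
      (fun e => m e = 0) (zet m α θ)]
  congr 1
  exact Finset.sum_congr rfl fun e he => zet_m0 m α θ (Finset.mem_filter.mp he).2

lemma key_split_plus (θ : Fin d → ℝ) :
    Hmat o t m α Q + Dmat o m - Amat o t m α Q θ = Pmat o t m α 1 θ := by
  apply Matrix.ext
  intro v w
  simp only [Matrix.sub_apply, Matrix.add_apply, Hmat, Dmat, Amat, Pmat, Matrix.of_apply]
  rw [amat_sum_split o t m α θ v w]
  push_cast
  ring

lemma key_split_minus (θ : Fin d → ℝ) :
    Amat o t m α Q θ - (Hmat o t m α Q - Dmat o m) = Pmat o t m α (-1) θ := by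
  apply Matrix.ext
  intro v w
  simp only [Matrix.sub_apply, Matrix.add_apply, Hmat, Dmat, Amat, Pmat, Matrix.of_apply]
  rw [amat_sum_split o t m α θ v w]
  push_cast
  ring

lemma dotC_Pmat (s : ℝ) (θ : Fin d → ℝ) (f : V → ℂ) :
    dotC f (Pmat o t m α s θ *ᵥ f)
      = ∑ e ∈ supE m, ((starRingEnd ℂ) (f (o e)) * f (o e)
          + (s : ℂ) * (zet m α θ e * ((starRingEnd ℂ) (f (o e)) * f (t e)))) := by
  unfold dotC
  have h1 : ∀ v, (starRingEnd ℂ) (f v) * (Pmat o t m α s θ *ᵥ f) v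
      = ∑ e ∈ (supE m).filter (fun e => o e = v),
          ((starRingEnd ℂ) (f (o e)) * f (o e)
            + (s : ℂ) * (zet m α θ e * ((starRingEnd ℂ) (f (o e)) * f (t e)))) := by
    intro v
    rw [Pmat_mulVec, Finset.sum_add_distrib]
    have h2 : ∀ e ∈ (supE m).filter (fun e => o e = v),
        (starRingEnd ℂ) (f (o e)) * f (o e) = (starRingEnd ℂ) (f v) * f v :=
      fun e he => by rw [(Finset.mem_filter.mp he).2]
    have h3 : ∀ e ∈ (supE m).filter (fun e => o e = v),
        (s : ℂ) * (zet m α θ e * ((starRingEnd ℂ) (f (o e)) * f (t e)))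
          = (s : ℂ) * (zet m α θ e * ((starRingEnd ℂ) (f v) * f (t e))) :=
      fun e he => by rw [(Finset.mem_filter.mp he).2]
    rw [Finset.sum_congr rfl h2, Finset.sum_congr rfl h3, Finset.sum_const, nsmul_eq_mul]
    unfold degmv
    rw [mul_add]
    congr 1
    · ring
    · rw [Finset.mul_sum, Finset.mul_sum]
      exact Finset.sum_congr rfl fun e _ => by ring
  simp_rw [h1]
  exact Finset.sum_fiberwise (supE m) o _

lemma pair_sum (hinv : ∀ e, inv (inv e) = e)
    (hoi : ∀ e, o (inv e) = t e) (hti : ∀ e, t (inv e) = o e)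
    (hm : ∀ e, m (inv e) = - m e) (hα : ∀ e, α (inv e) = - α e)
    (θ : Fin d → ℝ) (f : V → ℂ) (s : ℝ) (hs : s = 1 ∨ s = -1) :
    ∃ r : ℝ, 0 ≤ r ∧
      (∑ e ∈ supE m, ((starRingEnd ℂ) (f (o e)) * f (o e)
          + (s : ℂ) * (zet m α θ e * ((starRingEnd ℂ) (f (o e)) * f (t e)))))
        = (r : ℂ) := by
  set G : E → ℂ := fun e => (starRingEnd ℂ) (f (o e)) * f (o e)
    + (s : ℂ) * (zet m α θ e * ((starRingEnd ℂ) (f (o e)) * f (t e))) with hG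
  have hSinv : ∀ e ∈ supE m, inv e ∈ supE m := by
    intro e he
    simp only [supE, Finset.mem_filter, Finset.mem_univ, true_and] at he ⊢
    rw [hm]
    exact neg_ne_zero.mpr he
  have hrepeat : ∑ e ∈ supE m, G (inv e) = ∑ e ∈ supE m, G e :=
    Finset.sum_nbij' (fun e => inv e) (fun e => inv e) hSinv hSinv
      (fun a _ => hinv a) (fun a _ => hinv a) (fun a _ => rfl)
  have hss : (s : ℂ) * (s : ℂ) = 1 := by
    rcases hs with h | h <;> rw [h] <;> norm_num
  have hpair : ∀ e ∈ supE m, G e + G (inv e)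
      = ((Complex.normSq (f (o e) + (s : ℂ) * zet m α θ e * f (t e)) : ℝ) : ℂ) := by
    intro e _
    have hz := zet_inv inv m α hm hα θ e
    have hz1 := zet_mul_conj m α θ e
    rw [hG]
    simp only []
    rw [hoi e, hti e, hz, ← Complex.mul_conj]
    simp only [map_add, _root_.map_mul, Complex.conj_ofReal]
    linear_combination (-((starRingEnd ℂ) (f (t e)) * f (t e))) * hss
      + (-((starRingEnd ℂ) (f (t e)) * f (t e)) * ((s:ℂ) * (s:ℂ))) * hz1
  refine ⟨(∑ e ∈ supE m, Complex.normSq (f (o e) + (s : ℂ) * zet m α θ e * f (t e))) / 2,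
    div_nonneg (Finset.sum_nonneg fun e _ => Complex.normSq_nonneg _) (by norm_num), ?_⟩
  have h2G : (2 : ℂ) * ∑ e ∈ supE m, G e = ∑ e ∈ supE m, (G e + G (inv e)) := by
    calc (2 : ℂ) * ∑ e ∈ supE m, G e
        = (∑ e ∈ supE m, G e) + ∑ e ∈ supE m, G (inv e) := by rw [hrepeat]; ring
      _ = ∑ e ∈ supE m, (G e + G (inv e)) := Finset.sum_add_distrib.symm
  have h2G' : (2 : ℂ) * ∑ e ∈ supE m, G e
      = ((∑ e ∈ supE m, Complex.normSq (f (o e) + (s : ℂ) * zet m α θ e * f (t e)) : ℝ) : ℂ) := by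
    rw [h2G, Finset.sum_congr rfl hpair]
    push_cast
    rfl
  have : (∑ e ∈ supE m, G e)
      = ((∑ e ∈ supE m, Complex.normSq (f (o e) + (s : ℂ) * zet m α θ e * f (t e)) : ℝ) : ℂ) / 2 := by
    rw [← h2G']
    ring
  rw [this]
  push_cast
  ring

lemma degm_total : ∑ v, degmv o m v = suppCard m := by
  unfold degmv suppCard
  rw [← Finset.card_eq_sum_card_fiberwise (fun e (_ : e ∈ supE m) => Finset.mem_univ (o e))]
  congr 1
  ext e
  simp [supE]

end FSMBgraph3

/-- The total band length of the fiber Schrödinger operators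
`H(θ) = Δ_{m,α}(θ) + Q` is at most `2·#supp m`, and consequently the Lebesgue
measure of the union of their spectra is at most `2·#supp m` (which equals
`4I` where `I = (1/2)·#supp m`). -/
theorem fiber_spectrum_measure_bound
    {V E : Type} [Fintype V] [Fintype E] [Nonempty V] {d : ℕ}
    (o t : E → V) (inv : E → E)
    (hfp : ∀ e, inv e ≠ e) (hinv : ∀ e, inv (inv e) = e)
    (hoi : ∀ e, o (inv e) = t e) (hti : ∀ e, t (inv e) = o e)
    (m : E → Fin d → ℝ) (hm : ∀ e, m (inv e) = - m e)
    (α : E → ℝ) (hα : ∀ e, α (inv e) = - α e)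
    (Q : V → ℝ)
    (lam : (Fin d → ℝ) → Fin (Fintype.card V) → ℝ)
    (hlam : ∀ θ, IsEigList
      (fun f v => fiberLap o t m α θ f v + (Q v : ℂ) * f v) (lam θ)) :
    (∑ n : Fin (Fintype.card V),
        (sSup (Set.range fun θ => lam θ n) - sInf (Set.range fun θ => lam θ n)))
      ≤ 2 * (suppCard m : ℝ)
    ∧ MeasureTheory.volume
        {x : ℝ | ∃ (θ : Fin d → ℝ) (f : V → ℂ), f ≠ 0 ∧
          ∀ v, fiberLap o t m α θ f v + (Q v : ℂ) * f v = (x : ℂ) * f v}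
        ≤ ENNReal.ofReal (2 * (suppCard m : ℝ)) := by
  classical
  -- operator equality
  have hop : ∀ θ : Fin d → ℝ,
      (fun f v => fiberLap o t m α θ f v + (Q v : ℂ) * f v)
        = fun f => Matrix.mulVec (FSMBgraph.Amat o t m α Q θ) f :=
    fun θ => FSMBgraph.fiber_op_eq o t m α Q θ
  -- Hermitian reference operators
  have hHh : (FSMBgraph.Hmat o t m α Q).IsHermitian :=
    FSMBgraph2.Hmat_herm inv m α o t Q hinv hoi hti hm hα
  have hDh : (FSMBgraph.Dmat o m (V := V)).IsHermitian :=
    FSMBgraph2.Dmat_herm (m := m) (o := o)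
  have hplus : (FSMBgraph.Hmat o t m α Q + FSMBgraph.Dmat o m).IsHermitian := hHh.add hDh
  have hminus : (FSMBgraph.Hmat o t m α Q - FSMBgraph.Dmat o m).IsHermitian := hHh.sub hDh
  obtain ⟨lamP, uP, hPmono, hPorth, hPeig, hPtr⟩ := FSMBaux4.herm_eiglist _ hplus
  obtain ⟨lamM, uM, hMmono, hMorth, hMeig, hMtr⟩ := FSMBaux4.herm_eiglist _ hminus
  -- quadratic form comparisons
  have hformP : ∀ (θ : Fin d → ℝ) (f : V → ℂ), ∃ r : ℝ, 0 ≤ r ∧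
      dotC f (Matrix.mulVec (FSMBgraph.Hmat o t m α Q + FSMBgraph.Dmat o m) f)
        = dotC f (Matrix.mulVec (FSMBgraph.Amat o t m α Q θ) f) + r := by
    intro θ f
    obtain ⟨r, hr0, hr⟩ :=
      FSMBgraph3.pair_sum o t inv m α hinv hoi hti hm hα θ f 1 (Or.inl rfl)
    refine ⟨r, hr0, ?_⟩
    have hd : dotC f (Matrix.mulVec (FSMBgraph.Hmat o t m α Q + FSMBgraph.Dmat o m) f)
        - dotC f (Matrix.mulVec (FSMBgraph.Amat o t m α Q θ) f)
        = dotC f (Matrix.mulVec (FSMBgraph.Pmat o t m α 1 θ) f) := by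
      rw [← FSMBgraph3.key_split_plus o t m α Q θ]
      simp only [Matrix.sub_mulVec, Matrix.add_mulVec]
      unfold dotC
      rw [← Finset.sum_sub_distrib]
      refine Finset.sum_congr rfl fun v _ => ?_
      simp only [Pi.sub_apply]
      ring
    rw [FSMBgraph3.dotC_Pmat, hr] at hd
    linear_combination hd
  have hformM : ∀ (θ : Fin d → ℝ) (f : V → ℂ), ∃ r : ℝ, 0 ≤ r ∧
      dotC f (Matrix.mulVec (FSMBgraph.Amat o t m α Q θ) f)
        = dotC f (Matrix.mulVec (FSMBgraph.Hmat o t m α Q - FSMBgraph.Dmat o m) f) + r := by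
    intro θ f
    obtain ⟨r, hr0, hr⟩ :=
      FSMBgraph3.pair_sum o t inv m α hinv hoi hti hm hα θ f (-1) (Or.inr rfl)
    refine ⟨r, hr0, ?_⟩
    have hd : dotC f (Matrix.mulVec (FSMBgraph.Amat o t m α Q θ) f)
        - dotC f (Matrix.mulVec (FSMBgraph.Hmat o t m α Q - FSMBgraph.Dmat o m) f)
        = dotC f (Matrix.mulVec (FSMBgraph.Pmat o t m α (-1) θ) f) := by
      rw [← FSMBgraph3.key_split_minus o t m α Q θ]
      simp only [Matrix.sub_mulVec, Matrix.add_mulVec]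
      unfold dotC
      rw [← Finset.sum_sub_distrib]
      refine Finset.sum_congr rfl fun v _ => ?_
      simp only [Pi.sub_apply]
      ring
    rw [FSMBgraph3.dotC_Pmat, hr] at hd
    linear_combination hd
  -- comparison of eigenvalue lists
  have hcomp : ∀ (θ : Fin d → ℝ) (n : Fin (Fintype.card V)),
      lamM n ≤ lam θ n ∧ lam θ n ≤ lamP n := by
    intro θ n
    have hL := hlam θ
    unfold IsEigList at hL
    obtain ⟨hmono, u, hu, he⟩ := hL
    have he' : ∀ i, Matrix.mulVec (FSMBgraph.Amat o t m α Q θ) (u i)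
        = fun v => ((lam θ i : ℝ) : ℂ) * u i v := by
      intro i
      have h0 := he i
      calc Matrix.mulVec (FSMBgraph.Amat o t m α Q θ) (u i)
          = (fun f => Matrix.mulVec (FSMBgraph.Amat o t m α Q θ) f) (u i) := rfl
        _ = (fun f v => fiberLap o t m α θ f v + (Q v : ℂ) * f v) (u i) := by
            rw [← hop θ]
        _ = fun v => ((lam θ i : ℝ) : ℂ) * u i v := h0
    constructor
    · exact FSMBaux3.eig_le_eig (FSMBgraph.Hmat o t m α Q - FSMBgraph.Dmat o m)
        (FSMBgraph.Amat o t m α Q θ) lamM (lam θ) uM u hMmono hmono hMorth hu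
        hMeig he' (hformM θ) n
    · exact FSMBaux3.eig_le_eig (FSMBgraph.Amat o t m α Q θ)
        (FSMBgraph.Hmat o t m α Q + FSMBgraph.Dmat o m) (lam θ) lamP u uP hmono hPmono hu
        hPorth he' hPeig (hformP θ) n
  -- boundedness of eigenvalue ranges
  have hne : ∀ n : Fin (Fintype.card V), (Set.range fun θ => lam θ n).Nonempty :=
    fun n => ⟨lam 0 n, ⟨0, rfl⟩⟩
  have hbddA : ∀ n, BddAbove (Set.range fun θ => lam θ n) := by
    intro n
    refine ⟨lamP n, ?_⟩
    rintro x ⟨θ, rfl⟩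
    exact (hcomp θ n).2
  have hbddB : ∀ n, BddBelow (Set.range fun θ => lam θ n) := by
    intro n
    refine ⟨lamM n, ?_⟩
    rintro x ⟨θ, rfl⟩
    exact (hcomp θ n).1
  have hsup_le : ∀ n, sSup (Set.range fun θ => lam θ n) ≤ lamP n := by
    intro n
    refine csSup_le (hne n) ?_
    rintro x ⟨θ, rfl⟩
    exact (hcomp θ n).2
  have hinf_ge : ∀ n, lamM n ≤ sInf (Set.range fun θ => lam θ n) := by
    intro n
    refine le_csInf (hne n) ?_
    rintro x ⟨θ, rfl⟩
    exact (hcomp θ n).1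
  -- trace computation
  have hdiag : ∀ v, (FSMBgraph.Hmat o t m α Q + FSMBgraph.Dmat o m) v v
      - (FSMBgraph.Hmat o t m α Q - FSMBgraph.Dmat o m) v v
      = 2 * ((FSMBgraph.degmv o m v : ℕ) : ℂ) := by
    intro v
    have hD : FSMBgraph.Dmat o m v v = ((FSMBgraph.degmv o m v : ℕ) : ℂ) := by
      simp [FSMBgraph.Dmat]
    simp only [Matrix.add_apply, Matrix.sub_apply, hD]
    ring
  have hC : (∑ n, (lamP n : ℂ)) - ∑ n, (lamM n : ℂ) = 2 * ((suppCard m : ℕ) : ℂ) := by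
    rw [hPtr, hMtr, ← Finset.sum_sub_distrib, Finset.sum_congr rfl (fun v _ => hdiag v),
      ← Finset.mul_sum, ← Nat.cast_sum, FSMBgraph3.degm_total]
  have hsumR : (∑ n, lamP n) - (∑ n, lamM n) = 2 * (suppCard m : ℝ) := by
    exact_mod_cast hC
  have part1 : (∑ n : Fin (Fintype.card V),
      (sSup (Set.range fun θ => lam θ n) - sInf (Set.range fun θ => lam θ n)))
      ≤ 2 * (suppCard m : ℝ) := by
    calc (∑ n : Fin (Fintype.card V),
        (sSup (Set.range fun θ => lam θ n) - sInf (Set.range fun θ => lam θ n)))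
        ≤ ∑ n, (lamP n - lamM n) :=
          Finset.sum_le_sum fun n _ => sub_le_sub (hsup_le n) (hinf_ge n)
      _ = 2 * (suppCard m : ℝ) := by rw [Finset.sum_sub_distrib, hsumR]
  refine ⟨part1, ?_⟩
  -- part 2 : measure bound
  have hsubset : {x : ℝ | ∃ (θ : Fin d → ℝ) (f : V → ℂ), f ≠ 0 ∧
      ∀ v, fiberLap o t m α θ f v + (Q v : ℂ) * f v = (x : ℂ) * f v}
      ⊆ ⋃ n : Fin (Fintype.card V),
          Set.Icc (sInf (Set.range fun θ => lam θ n)) (sSup (Set.range fun θ => lam θ n)) := by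
    rintro x ⟨θ, f, hf0, hfe⟩
    have hL := hlam θ
    unfold IsEigList at hL
    obtain ⟨hmono, u, hu, he⟩ := hL
    have he' : ∀ i, Matrix.mulVec (FSMBgraph.Amat o t m α Q θ) (u i)
        = fun v => ((lam θ i : ℝ) : ℂ) * u i v := by
      intro i
      calc Matrix.mulVec (FSMBgraph.Amat o t m α Q θ) (u i)
          = (fun f => Matrix.mulVec (FSMBgraph.Amat o t m α Q θ) f) (u i) := rfl
        _ = (fun f v => fiberLap o t m α θ f v + (Q v : ℂ) * f v) (u i) := by
            rw [← hop θ]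
        _ = fun v => ((lam θ i : ℝ) : ℂ) * u i v := he i
    have hfe' : Matrix.mulVec (FSMBgraph.Amat o t m α Q θ) f = fun v => (x : ℂ) * f v := by
      have h2 : (fun f v => fiberLap o t m α θ f v + (Q v : ℂ) * f v) f
          = Matrix.mulVec (FSMBgraph.Amat o t m α Q θ) f := by rw [hop θ]
      funext v
      rw [← congrFun h2 v]
      exact hfe v
    obtain ⟨n, hn⟩ := FSMBaux2.eig_mem (FSMBgraph.Amat o t m α Q θ) (lam θ) u hu he' x f hf0 hfe'
    refine Set.mem_iUnion.mpr ⟨n, ?_, ?_⟩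
    · rw [hn]
      exact csInf_le (hbddB n) ⟨θ, rfl⟩
    · rw [hn]
      exact le_csSup (hbddA n) ⟨θ, rfl⟩
  have hnonneg : ∀ n : Fin (Fintype.card V),
      0 ≤ sSup (Set.range fun θ => lam θ n) - sInf (Set.range fun θ => lam θ n) := by
    intro n
    have h1 : sInf (Set.range fun θ => lam θ n) ≤ lam 0 n := csInf_le (hbddB n) ⟨0, rfl⟩
    have h2 : lam 0 n ≤ sSup (Set.range fun θ => lam θ n) := le_csSup (hbddA n) ⟨0, rfl⟩
    linarith
  calc MeasureTheory.volume {x : ℝ | ∃ (θ : Fin d → ℝ) (f : V → ℂ), f ≠ 0 ∧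
        ∀ v, fiberLap o t m α θ f v + (Q v : ℂ) * f v = (x : ℂ) * f v}
      ≤ MeasureTheory.volume (⋃ n : Fin (Fintype.card V),
          Set.Icc (sInf (Set.range fun θ => lam θ n))
            (sSup (Set.range fun θ => lam θ n))) := MeasureTheory.measure_mono hsubset
    _ ≤ ∑' n : Fin (Fintype.card V), MeasureTheory.volume
          (Set.Icc (sInf (Set.range fun θ => lam θ n))
            (sSup (Set.range fun θ => lam θ n))) := MeasureTheory.measure_iUnion_le _
    _ = ∑ n : Fin (Fintype.card V), MeasureTheory.volume
          (Set.Icc (sInf (Set.range fun θ => lam θ n))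
            (sSup (Set.range fun θ => lam θ n))) := tsum_fintype _
    _ = ∑ n : Fin (Fintype.card V), ENNReal.ofReal
          (sSup (Set.range fun θ => lam θ n) - sInf (Set.range fun θ => lam θ n)) := by
        refine Finset.sum_congr rfl fun n _ => ?_
        rw [Real.volume_Icc]
    _ = ENNReal.ofReal (∑ n : Fin (Fintype.card V),
          (sSup (Set.range fun θ => lam θ n) - sInf (Set.range fun θ => lam θ n))) := by
        rw [ENNReal.ofReal_sum_of_nonneg fun n _ => hnonneg n]
    _ ≤ ENNReal.ofReal (2 * (suppCard m : ℝ)) := ENNReal.ofReal_le_ofReal part1
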